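/- arXiv:1109.1334 — 2 statements merged into one kernel-verified Lean document; each statement's English description precedes it below -/
import Mathlib

section
/- Let X be a finite nonempty set, Y a finite set, and for each index t in a finite index set T₂ let y_{t(1)}, y_{t(2)} ∈ Y be two distinct points, with the pairs {y_{t(1)}, y_{t(2)}} pairwise disjoint as t ranges over T₂. For t, t' ∈ T₂ define G_{t,t'} = (1/(2|X|)) J_X ⊗ (J_{{y_{t(1)}},{y_{t'(1)}}} + J_{{y_{t(2)}},{y_{t'(2)}}} − J_{{y_{t(1)}},{y_{t'(2)}}} − J_{{y_{t(2)}},{y_{t'(1)}}}). Then G_{t,t'} · G_{t''',t''} = δ_{t',t'''} G_{t,t''} for all t, t', t'', t''' ∈ T₂; that is, the matrices G_{t,t'} multiply like matrix units. -/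
open Matrix Kronecker

theorem stmt_2 (X Y T₂ : Type*) [Fintype X] [Nonempty X] [Fintype Y] [DecidableEq Y]
    [Fintype T₂] [DecidableEq T₂]
    (y1 y2 : T₂ → Y) (hne : ∀ t, y1 t ≠ y2 t)
    (hdisj : ∀ t t', t ≠ t' → ({y1 t, y2 t} : Set Y) ∩ {y1 t', y2 t'} = ∅) :
    let J : Matrix X X ℂ := Matrix.of fun _ _ => 1
    let G : T₂ → T₂ → Matrix (X × Y) (X × Y) ℂ := fun t t' =>
      (1 / (2 * (Fintype.card X : ℂ))) •
        (J ⊗ₖ (Matrix.single (y1 t) (y1 t') 1 + Matrix.single (y2 t) (y2 t') 1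
          - Matrix.single (y1 t) (y2 t') 1 - Matrix.single (y2 t) (y1 t') 1))
    ∀ t t' t'' t''' : T₂,
      G t t' * G t''' t'' = if t' = t''' then G t t'' else 0 := by
  intro J G t t' t'' t'''
  have hX : (Fintype.card X : ℂ) ≠ 0 := by
    exact_mod_cast Nat.cast_ne_zero.mpr Fintype.card_ne_zero
  have hJJ : J * J = (Fintype.card X : ℂ) • J := by
    ext i j
    simp [J, Matrix.mul_apply]
  set M : T₂ → T₂ → Matrix Y Y ℂ := fun a b =>
    Matrix.single (y1 a) (y1 b) 1 + Matrix.single (y2 a) (y2 b) 1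
      - Matrix.single (y1 a) (y2 b) 1 - Matrix.single (y2 a) (y1 b) 1 with hM
  have key : M t t' * M t''' t'' = if t' = t''' then (2 : ℂ) • M t t'' else 0 := by
    by_cases h : t' = t'''
    · subst h
      rw [if_pos rfl]
      have h1 := hne t'
      have h2 := (hne t').symm
      simp only [hM, sub_mul, add_mul, mul_sub, mul_add,
        Matrix.single_mul_single_same, Matrix.single_mul_single_of_ne _ _ _ _ h1,
        Matrix.single_mul_single_of_ne _ _ _ _ h2, one_mul]
      module
    · have hd := hdisj t' t''' h
      have key' : ∀ a b : Y, a ∈ ({y1 t', y2 t'} : Set Y) → b ∈ ({y1 t''', y2 t'''} : Set Y)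
          → a ≠ b := by
        intro a b ha hb hab
        subst hab
        exact Set.eq_empty_iff_forall_notMem.mp hd a ⟨ha, hb⟩
      have h11 := key' (y1 t') (y1 t''') (by simp) (by simp)
      have h12 := key' (y1 t') (y2 t''') (by simp) (by simp)
      have h21 := key' (y2 t') (y1 t''') (by simp) (by simp)
      have h22 := key' (y2 t') (y2 t''') (by simp) (by simp)
      rw [if_neg h]
      simp only [hM, sub_mul, add_mul, mul_sub, mul_add,
        Matrix.single_mul_single_of_ne _ _ _ _ h11, Matrix.single_mul_single_of_ne _ _ _ _ h12,
        Matrix.single_mul_single_of_ne _ _ _ _ h21, Matrix.single_mul_single_of_ne _ _ _ _ h22]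
      simp
  have hG : ∀ a b, G a b = (1 / (2 * (Fintype.card X : ℂ))) • (J ⊗ₖ M a b) := fun a b => rfl
  rw [hG, hG, Matrix.smul_mul, Matrix.mul_smul, smul_smul, ← Matrix.mul_kronecker_mul, hJJ,
    key]
  by_cases h : t' = t'''
  · simp only [if_pos h, hG]
    rw [Matrix.kronecker_smul, Matrix.smul_kronecker, smul_smul, smul_smul]
    congr 1
    field_simp
  · simp [if_neg h]
end

section
/- Let X be a finite nonempty set and let B ⊆ Y be a two-element subset {y₁, y₂} of a finite set Y. Then in Mat_{X×Y}(ℂ) the identity ε_{X×B} I = (1/(2|X|)) J_{X×B} + [ (ε_{X×B} − (1/|X|)(J_{X×{y₁}} + J_{X×{y₂}}) ] + (1/(2|X|)) J_X ⊗ (ε_{y₁} + ε_{y₂} − J_{{y₁},{y₂}} − J_{{y₂},{y₁}}) holds, i.e., the three idempotents on the right sum to the diagonal projection ε_{X×B}, and they are pairwise orthogonal idempotents. -/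
open Matrix Kronecker

private lemma key8 {Y : Type*} [Fintype Y] [DecidableEq Y] (a b c d : Y) :
    Matrix.single a b (1:ℂ) * Matrix.single c d 1
      = if b = c then Matrix.single a d 1 else 0 := by
  by_cases h : b = c
  · subst h; simp
  · simp [Matrix.single_mul_single_of_ne (h := h), h]

private lemma aux_eps {X Y : Type*} [Fintype X] [Fintype Y] [DecidableEq X] [DecidableEq Y]
    (y₁ y₂ : Y) (hy : y₁ ≠ y₂) :
    (Matrix.diagonal fun p : X × Y => if p.2 = y₁ ∨ p.2 = y₂ then (1:ℂ) else 0)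
      = (1 : Matrix X X ℂ) ⊗ₖ (Matrix.single y₁ y₁ 1 + Matrix.single y₂ y₂ 1) := by
  ext ⟨x, y⟩ ⟨x', y'⟩
  simp only [Matrix.diagonal_apply, kroneckerMap_apply, Matrix.one_apply,
    Matrix.add_apply, Matrix.single, Matrix.of_apply, Prod.mk.injEq]
  by_cases h1 : y = y₁ <;> by_cases h2 : y = y₂ <;> by_cases h3 : y' = y₁ <;>
    by_cases h4 : y' = y₂ <;> simp_all [eq_comm]

private lemma aux_JXB {X Y : Type*} [Fintype X] [Fintype Y] [DecidableEq X] [DecidableEq Y]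
    (y₁ y₂ : Y) (hy : y₁ ≠ y₂) :
    (Matrix.of fun p q : X × Y => if (p.2 = y₁ ∨ p.2 = y₂) ∧ (q.2 = y₁ ∨ q.2 = y₂)
        then (1:ℂ) else 0)
      = (Matrix.of fun _ _ => (1:ℂ)) ⊗ₖ (Matrix.single y₁ y₁ 1
        + Matrix.single y₂ y₂ 1 + Matrix.single y₁ y₂ 1
        + Matrix.single y₂ y₁ 1) := by
  ext ⟨x, y⟩ ⟨x', y'⟩
  simp only [kroneckerMap_apply, Matrix.add_apply, Matrix.single,
    Matrix.of_apply, one_mul]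
  by_cases h1 : y = y₁ <;> by_cases h2 : y = y₂ <;> by_cases h3 : y' = y₁ <;>
    by_cases h4 : y' = y₂ <;> simp_all [eq_comm]

private lemma aux_JXy {X Y : Type*} [Fintype X] [Fintype Y] [DecidableEq X] [DecidableEq Y]
    (z : Y) :
    (Matrix.of fun p q : X × Y => if p.2 = z ∧ q.2 = z then (1:ℂ) else 0)
      = (Matrix.of fun _ _ => (1:ℂ)) ⊗ₖ Matrix.single z z 1 := by
  ext ⟨x, y⟩ ⟨x', y'⟩
  simp only [kroneckerMap_apply, Matrix.single, Matrix.of_apply, one_mul]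
  simp [eq_comm]

theorem stmt_8 (X Y : Type*) [Fintype X] [Nonempty X] [Fintype Y] [DecidableEq X] [DecidableEq Y]
    (y₁ y₂ : Y) (hy : y₁ ≠ y₂) :
    let J : Matrix X X ℂ := Matrix.of fun _ _ => 1
    -- diagonal projection onto X × {y₁, y₂}
    let εXB : Matrix (X × Y) (X × Y) ℂ :=
      Matrix.diagonal fun p => if p.2 = y₁ ∨ p.2 = y₂ then 1 else 0
    -- all-ones on (X × {y₁,y₂}) × (X × {y₁,y₂})
    let JXB : Matrix (X × Y) (X × Y) ℂ :=
      Matrix.of fun p q => if (p.2 = y₁ ∨ p.2 = y₂) ∧ (q.2 = y₁ ∨ q.2 = y₂) then 1 else 0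
    -- all-ones on (X × {y}) × (X × {y})
    let JXy : Y → Matrix (X × Y) (X × Y) ℂ := fun y =>
      Matrix.of fun p q => if p.2 = y ∧ q.2 = y then 1 else 0
    let E₁ : Matrix (X × Y) (X × Y) ℂ := (1 / (2 * (Fintype.card X : ℂ))) • JXB
    let E₂ : Matrix (X × Y) (X × Y) ℂ :=
      εXB - (1 / (Fintype.card X : ℂ)) • (JXy y₁ + JXy y₂)
    let E₃ : Matrix (X × Y) (X × Y) ℂ :=
      (1 / (2 * (Fintype.card X : ℂ))) •
        (J ⊗ₖ (Matrix.single y₁ y₁ 1 + Matrix.single y₂ y₂ 1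
          - Matrix.single y₁ y₂ 1 - Matrix.single y₂ y₁ 1))
    εXB * 1 = E₁ + E₂ + E₃ ∧
    E₁ * E₁ = E₁ ∧ E₂ * E₂ = E₂ ∧ E₃ * E₃ = E₃ ∧
    E₁ * E₂ = 0 ∧ E₂ * E₁ = 0 ∧ E₁ * E₃ = 0 ∧ E₃ * E₁ = 0 ∧
    E₂ * E₃ = 0 ∧ E₃ * E₂ = 0 := by
  intro J εXB JXB JXy E₁ E₂ E₃
  set n : ℂ := (Fintype.card X : ℂ) with hn_def
  have hn : n ≠ 0 := Nat.cast_ne_zero.2 Fintype.card_ne_zero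
  set S : Matrix Y Y ℂ := Matrix.single y₁ y₁ 1 + Matrix.single y₂ y₂ 1 with hS_def
  set T : Matrix Y Y ℂ := Matrix.single y₁ y₁ 1 + Matrix.single y₂ y₂ 1
    + Matrix.single y₁ y₂ 1 + Matrix.single y₂ y₁ 1 with hT_def
  set D : Matrix Y Y ℂ := Matrix.single y₁ y₁ 1 + Matrix.single y₂ y₂ 1
    - Matrix.single y₁ y₂ 1 - Matrix.single y₂ y₁ 1 with hD_def
  have hJJ : J * J = n • J := by
    ext i j
    simp [J, Matrix.mul_apply, hn_def, Finset.card_univ]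
  have hJ1 : J * 1 = J := Matrix.mul_one J
  have h1J : (1 : Matrix X X ℂ) * J = J := Matrix.one_mul J
  have hSS : S * S = S := by
    simp only [hS_def, add_mul, mul_add, sub_mul, mul_sub, key8, hy, hy.symm,
      eq_self_iff_true, if_true, if_false]
    module
  have hST : S * T = T := by
    simp only [hS_def, hT_def, add_mul, mul_add, sub_mul, mul_sub, key8, hy, hy.symm,
      eq_self_iff_true, if_true, if_false]
    module
  have hTS : T * S = T := by
    simp only [hS_def, hT_def, add_mul, mul_add, sub_mul, mul_sub, key8, hy, hy.symm,
      eq_self_iff_true, if_true, if_false]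
    module
  have hSD : S * D = D := by
    simp only [hS_def, hD_def, add_mul, mul_add, sub_mul, mul_sub, key8, hy, hy.symm,
      eq_self_iff_true, if_true, if_false]
    module
  have hDS : D * S = D := by
    simp only [hS_def, hD_def, add_mul, mul_add, sub_mul, mul_sub, key8, hy, hy.symm,
      eq_self_iff_true, if_true, if_false]
    module
  have hTT : T * T = (2 : ℂ) • T := by
    simp only [hT_def, add_mul, mul_add, sub_mul, mul_sub, key8, hy, hy.symm,
      eq_self_iff_true, if_true, if_false]
    module
  have hDD : D * D = (2 : ℂ) • D := by
    simp only [hD_def, add_mul, mul_add, sub_mul, mul_sub, key8, hy, hy.symm,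
      eq_self_iff_true, if_true, if_false]
    module
  have hTD : T * D = 0 := by
    simp only [hT_def, hD_def, add_mul, mul_add, sub_mul, mul_sub, key8, hy, hy.symm,
      eq_self_iff_true, if_true, if_false]
    module
  have hDT : D * T = 0 := by
    simp only [hT_def, hD_def, add_mul, mul_add, sub_mul, mul_sub, key8, hy, hy.symm,
      eq_self_iff_true, if_true, if_false]
    module
  have hε : εXB = (1 : Matrix X X ℂ) ⊗ₖ S := aux_eps y₁ y₂ hy
  have hJXB : JXB = J ⊗ₖ T := aux_JXB y₁ y₂ hy
  have hJXy12 : JXy y₁ + JXy y₂ = J ⊗ₖ S := by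
    rw [show JXy y₁ = J ⊗ₖ Matrix.single y₁ y₁ 1 from aux_JXy y₁,
      show JXy y₂ = J ⊗ₖ Matrix.single y₂ y₂ 1 from aux_JXy y₂,
      hS_def, Matrix.kronecker_add]
  have hE₁ : E₁ = (1 / (2 * n)) • (J ⊗ₖ T) := by
    rw [show E₁ = (1 / (2 * n)) • JXB from rfl, hJXB]
  have hE₂ : E₂ = (1 : Matrix X X ℂ) ⊗ₖ S - (1 / n) • (J ⊗ₖ S) := by
    rw [show E₂ = εXB - (1 / n) • (JXy y₁ + JXy y₂) from rfl, hε, hJXy12]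
  have hE₃ : E₃ = (1 / (2 * n)) • (J ⊗ₖ D) := rfl
  have hTDS : T + D = (2 : ℂ) • S := by
    simp only [hT_def, hD_def, hS_def, smul_add]
    module
  refine ⟨?_, ?_, ?_, ?_, ?_, ?_, ?_, ?_, ?_, ?_⟩
  · -- sum of the three idempotents
    rw [Matrix.mul_one, hE₁, hE₂, hE₃, hε]
    have hsum : (1/(2*n)) • (J ⊗ₖ T) + (1/(2*n)) • (J ⊗ₖ D) = (1/n) • (J ⊗ₖ S) := by
      rw [← smul_add, ← Matrix.kronecker_add, hTDS, Matrix.kronecker_smul, smul_smul]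
      congr 1
      field_simp
    rw [show (1/(2*n)) • (J ⊗ₖ T) + ((1 : Matrix X X ℂ) ⊗ₖ S - (1/n) • (J ⊗ₖ S))
          + (1/(2*n)) • (J ⊗ₖ D)
        = (1 : Matrix X X ℂ) ⊗ₖ S
          + ((1/(2*n)) • (J ⊗ₖ T) + (1/(2*n)) • (J ⊗ₖ D) - (1/n) • (J ⊗ₖ S)) from by abel,
      hsum]
    simp
  all_goals
    simp only [hE₁, hE₂, hE₃, hε, Matrix.mul_one, Matrix.smul_mul, Matrix.mul_smul,
      Matrix.sub_mul, Matrix.mul_sub, ← Matrix.mul_kronecker_mul, hJJ, hJ1, h1J,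
      Matrix.one_mul, hSS, hST, hTS, hSD, hDS, hTT, hDD, hTD, hDT,
      Matrix.smul_kronecker, Matrix.kronecker_smul, Matrix.kronecker_zero, smul_zero,
      smul_smul, smul_sub]
  all_goals match_scalars
  all_goals field_simp
  all_goals ring
end
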